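/- Let G be a torsion-free abelian group that is finitely generated (or more generally linearly orderable by translation-invariant order), n a positive integer, A, B finite nonempty multisets over G, and g ∈ G. If nA + {g} = nB (n-fold pairwise sums), then there exists h ∈ G with g = nh and A + {h} = B. -/

import Mathlib

set_option linter.unusedSectionVars false

/-- Pairwise sum of multisets over an additive group. -/
def pSum {G : Type*} [AddCommGroup G] (A B : Multiset G) : Multiset G :=
  (A.product B).map fun p => p.1 + p.2

/-- `nSum n A` is the `n`-fold pairwise sum `A + A + ⋯ + A` (with `nSum 0 A = {0}`). -/
def nSum {G : Type*} [AddCommGroup G] : ℕ → Multiset G → Multiset G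
  | 0, _ => {0}
  | n + 1, A => pSum A (nSum n A)

section Aux
variable {G : Type*} [AddCommGroup G]

lemma pSum_def (A B : Multiset G) : pSum A B = A.bind fun a => B.map (a + ·) := by
  simp [pSum, Multiset.product, Multiset.map_bind, Multiset.map_map, Function.comp]

lemma pSum_zero_left (B : Multiset G) : pSum 0 B = 0 := by simp [pSum_def]

lemma pSum_cons (a : G) (A B : Multiset G) :
    pSum (a ::ₘ A) B = B.map (a + ·) + pSum A B := by
  simp [pSum_def, Multiset.cons_bind]

lemma pSum_singleton_right (A : Multiset G) (g : G) :
    pSum A {g} = A.map (· + g) := by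
  induction A using Multiset.induction with
  | empty => simp [pSum_zero_left]
  | cons a A ih => simp [pSum_cons, ih]

lemma mem_pSum {A B : Multiset G} {x : G} :
    x ∈ pSum A B ↔ ∃ a ∈ A, ∃ b ∈ B, x = a + b := by
  simp [pSum_def, Multiset.mem_bind, Multiset.mem_map, eq_comm]

lemma pSum_ne_zero {A B : Multiset G} (hA : A ≠ 0) (hB : B ≠ 0) : pSum A B ≠ 0 := by
  obtain ⟨a, ha⟩ := Multiset.exists_mem_of_ne_zero hA
  obtain ⟨b, hb⟩ := Multiset.exists_mem_of_ne_zero hB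
  intro h0
  have := mem_pSum.2 ⟨a, ha, b, hb, rfl⟩
  rw [h0] at this
  simp at this

lemma nSum_ne_zero {A : Multiset G} (hA : A ≠ 0) (n : ℕ) : nSum n A ≠ 0 := by
  induction n with
  | zero => simp [nSum]
  | succ n ih => exact pSum_ne_zero hA ih

noncomputable def toFA (A : Multiset G) : AddMonoidAlgebra ℚ G :=
  (A.map fun a => AddMonoidAlgebra.single a (1:ℚ)).sum

lemma toFA_zero : toFA (0 : Multiset G) = 0 := by simp [toFA]

lemma toFA_cons (a : G) (A : Multiset G) :
    toFA (a ::ₘ A) = AddMonoidAlgebra.single a 1 + toFA A := by simp [toFA]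

lemma toFA_add (A B : Multiset G) : toFA (A + B) = toFA A + toFA B := by
  simp [toFA]

lemma toFA_singleton (g : G) : toFA ({g} : Multiset G) = AddMonoidAlgebra.single g 1 := by
  simp [toFA]

lemma toFA_apply [DecidableEq G] (A : Multiset G) (x : G) : (toFA A).coeff x = (A.count x : ℚ) := by
  classical
  induction A using Multiset.induction with
  | empty => simp [toFA_zero]
  | cons a A ih =>
    rw [toFA_cons]
    simp only [AddMonoidAlgebra.coeff_add, AddMonoidAlgebra.coeff_single, Finsupp.add_apply,
      Finsupp.single_apply]
    by_cases h : a = x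
    · subst h; simp [ih, add_comm]
    · simp [h, ih, Ne.symm h]

lemma toFA_ne_zero {A : Multiset G} (hA : A ≠ 0) : toFA A ≠ 0 := by
  classical
  obtain ⟨a, ha⟩ := Multiset.exists_mem_of_ne_zero hA
  intro h
  have := toFA_apply A a
  rw [h] at this
  simp only [AddMonoidAlgebra.coeff_zero, Finsupp.coe_zero, Pi.zero_apply] at this
  have : A.count a = 0 := by exact_mod_cast this.symm
  simp [Multiset.count_eq_zero] at this
  exact this ha

lemma toFA_injective : Function.Injective (toFA (G := G)) := by
  classical
  intro A B h
  rw [Multiset.ext]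
  intro x
  have := congrArg (fun f => f.coeff x) h
  simp only [toFA_apply] at this
  exact_mod_cast this

lemma toFA_map_add (a : G) (B : Multiset G) :
    toFA (B.map (a + ·)) = AddMonoidAlgebra.single a 1 * toFA B := by
  induction B using Multiset.induction with
  | empty => simp [toFA_zero]
  | cons b B ih =>
    simp only [Multiset.map_cons, toFA_cons, ih, mul_add, AddMonoidAlgebra.single_mul_single,
      one_mul]

lemma toFA_pSum (A B : Multiset G) : toFA (pSum A B) = toFA A * toFA B := by
  induction A using Multiset.induction with
  | empty => simp [pSum_zero_left, toFA_zero]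
  | cons a A ih =>
    rw [pSum_cons, toFA_add, toFA_map_add, ih, toFA_cons, add_mul]

lemma toFA_nSum (n : ℕ) (A : Multiset G) : toFA (nSum n A) = toFA A ^ n := by
  induction n with
  | zero => simp [nSum, toFA_singleton, AddMonoidAlgebra.one_def]
  | succ n ih => rw [nSum, toFA_pSum, ih, pow_succ, mul_comm]

end Aux


section OrderedMax
variable {H : Type*} [AddCommGroup H] [LinearOrder H] [IsOrderedAddMonoid H]

noncomputable def mmax (A : Multiset H) (hA : A ≠ 0) : H :=
  A.toFinset.max' (by classical exact Multiset.toFinset_nonempty.2 hA)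

lemma mmax_mem (A : Multiset H) (hA : A ≠ 0) : mmax A hA ∈ A := by
  classical
  have := (A.toFinset.max'_mem (by classical exact Multiset.toFinset_nonempty.2 hA))
  exact Multiset.mem_toFinset.1 (by unfold mmax; convert this)

lemma le_mmax {A : Multiset H} (hA : A ≠ 0) {a : H} (ha : a ∈ A) : a ≤ mmax A hA := by
  classical
  exact A.toFinset.le_max' a (Multiset.mem_toFinset.2 ha)

lemma mmax_singleton (g : H) : mmax ({g} : Multiset H) (by simp) = g := by
  have h1 := mmax_mem ({g} : Multiset H) (by simp)
  simpa using h1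

lemma mmax_pSum {A B : Multiset H} (hA : A ≠ 0) (hB : B ≠ 0) :
    mmax (pSum A B) (pSum_ne_zero hA hB) = mmax A hA + mmax B hB := by
  apply le_antisymm
  · obtain ⟨a, ha, b, hb, hx⟩ := mem_pSum.1 (mmax_mem (pSum A B) (pSum_ne_zero hA hB))
    rw [hx]
    exact add_le_add (le_mmax hA ha) (le_mmax hB hb)
  · exact le_mmax _ (mem_pSum.2 ⟨_, mmax_mem A hA, _, mmax_mem B hB, rfl⟩)

lemma mmax_nSum {A : Multiset H} (hA : A ≠ 0) (n : ℕ) :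
    mmax (nSum n A) (nSum_ne_zero hA n) = n • mmax A hA := by
  induction n with
  | zero =>
    have : mmax (nSum 0 A) (nSum_ne_zero hA 0) ∈ nSum 0 A := mmax_mem _ _
    simp only [nSum] at this ⊢
    simpa using this
  | succ n ih =>
    have : nSum (n+1) A = pSum A (nSum n A) := rfl
    rw [show mmax (nSum (n+1) A) (nSum_ne_zero hA (n+1))
        = mmax (pSum A (nSum n A)) (pSum_ne_zero hA (nSum_ne_zero hA n)) from rfl,
      mmax_pSum hA (nSum_ne_zero hA n), ih, succ_nsmul, add_comm]

noncomputable def toFAHom : Multiset H →+ AddMonoidAlgebra ℚ H where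
  toFun := toFA
  map_zero' := toFA_zero
  map_add' := toFA_add

theorem main_ordered (n : ℕ) (hn : 0 < n) (A B : Multiset H)
    (hA : A ≠ 0) (hB : B ≠ 0) (g : H)
    (h : pSum (nSum n A) {g} = nSum n B) :
    ∃ h' : H, g = n • h' ∧ pSum A {h'} = B := by
  have hgsing : ({g} : Multiset H) ≠ 0 := by simp
  -- max computation
  have hmax : n • mmax A hA + g = n • mmax B hB := by
    have h1 : mmax (pSum (nSum n A) {g}) (pSum_ne_zero (nSum_ne_zero hA n) hgsing)
        = mmax (nSum n B) (nSum_ne_zero hB n) := by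
      congr 1
    rw [mmax_pSum (nSum_ne_zero hA n) hgsing, mmax_nSum hA n, mmax_nSum hB n,
      mmax_singleton] at h1
    exact h1
  refine ⟨mmax B hB - mmax A hA, ?_, ?_⟩
  · rw [smul_sub, ← hmax]; abel
  · set h' := mmax B hB - mmax A hA with hh'
    have hg : g = n • h' := by rw [hh', smul_sub, ← hmax]; abel
    set C := pSum A {h'} with hC
    have hCne : C ≠ 0 := pSum_ne_zero hA (by simp)
    set p := toFA C with hp
    set q := toFA B with hq
    have hpow : p ^ n = q ^ n := by
      have e1 : p = toFA A * AddMonoidAlgebra.single h' 1 := by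
        rw [hp, hC, toFA_pSum, toFA_singleton]
      have e2 : p ^ n = toFA A ^ n * AddMonoidAlgebra.single g 1 := by
        rw [e1, mul_pow, AddMonoidAlgebra.single_pow, one_pow, ← hg]
      rw [e2, ← toFA_nSum, ← toFA_singleton, ← toFA_pSum, h, toFA_nSum]
    -- geometric sum argument
    have key : (∑ i ∈ Finset.range n, p ^ i * q ^ (n - 1 - i)) * (p - q) = 0 := by
      rw [geom_sum₂_mul, hpow, sub_self]
    have hSne : (∑ i ∈ Finset.range n, p ^ i * q ^ (n - 1 - i)) ≠ 0 := by
      have hrepr : ∀ i, p ^ i * q ^ (n - 1 - i)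
          = toFA (pSum (nSum i C) (nSum (n - 1 - i) B)) := by
        intro i
        rw [toFA_pSum, toFA_nSum, toFA_nSum]
      have : (∑ i ∈ Finset.range n, p ^ i * q ^ (n - 1 - i))
          = toFA (∑ i ∈ Finset.range n, pSum (nSum i C) (nSum (n - 1 - i) B)) := by
        rw [show (toFA (∑ i ∈ Finset.range n, pSum (nSum i C) (nSum (n - 1 - i) B)))
            = toFAHom (∑ i ∈ Finset.range n, pSum (nSum i C) (nSum (n - 1 - i) B)) from rfl,
          map_sum]
        exact Finset.sum_congr rfl fun i _ => hrepr i
      rw [this]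
      apply toFA_ne_zero
      intro hM
      have hle : pSum (nSum (n-1) C) (nSum (n - 1 - (n-1)) B)
          ≤ ∑ i ∈ Finset.range n, pSum (nSum i C) (nSum (n - 1 - i) B) :=
        Finset.single_le_sum (f := fun i => pSum (nSum i C) (nSum (n - 1 - i) B))
          (fun i _ => Multiset.zero_le _) (Finset.mem_range.2 (by omega))
      rw [hM] at hle
      exact pSum_ne_zero (nSum_ne_zero hCne (n-1)) (nSum_ne_zero hB (n-1-(n-1)))
        (Multiset.le_zero.1 hle)
    have : p - q = 0 := by
      rcases mul_eq_zero.1 key with h0 | h0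
      · exact absurd h0 hSne
      · exact h0
    have hpq : p = q := sub_eq_zero.1 this
    exact toFA_injective hpq

end OrderedMax


section MapLemmas
variable {G H : Type*} [AddCommGroup G] [AddCommGroup H]

lemma pSum_map (φ : G →+ H) (A B : Multiset G) :
    (pSum A B).map φ = pSum (A.map φ) (B.map φ) := by
  induction A using Multiset.induction with
  | empty => simp [pSum_zero_left]
  | cons a A ih =>
    simp only [pSum_cons, Multiset.map_add, Multiset.map_cons, ih, Multiset.map_map]
    congr 1
    simp [Function.comp_def, map_add]

lemma nSum_map (φ : G →+ H) (n : ℕ) (A : Multiset G) :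
    (nSum n A).map φ = nSum n (A.map φ) := by
  induction n with
  | zero => simp [nSum]
  | succ n ih =>
    show (pSum A (nSum n A)).map φ = pSum (A.map φ) (nSum n (A.map φ))
    rw [pSum_map, ih]

end MapLemmas

theorem multiset_div_by_n_with_translation {G : Type*} [AddCommGroup G]
    (hfg : AddGroup.FG G) (hG : ∀ g : G, g ≠ 0 → ¬IsOfFinAddOrder g)
    (n : ℕ) (hn : 0 < n)
    (A B : Multiset G) (hA : A ≠ 0) (hB : B ≠ 0) (g : G)
    (h : pSum (nSum n A) {g} = nSum n B) :
    ∃ h' : G, g = n • h' ∧ pSum A {h'} = B := by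
  haveI : Module.Finite ℤ G := Module.Finite.iff_addGroup_fg.mpr hfg
  haveI : IsAddTorsionFree G := ⟨fun n hn x y hxy => by
    by_contra hne
    exact hG (x - y) (sub_ne_zero.2 hne) (isOfFinAddOrder_iff_nsmul_eq_zero.2
      ⟨n, Nat.pos_of_ne_zero hn, by simp only [smul_sub, sub_eq_zero]; exact hxy⟩)⟩
  haveI : Module.Free ℤ G := Module.free_of_finite_type_torsion_free'
  set ι := Module.Free.ChooseBasisIndex ℤ G with hι
  haveI : Fintype ι := Module.Free.ChooseBasisIndex.fintype ℤ G
  letI : LinearOrder ι := LinearOrder.lift' (Fintype.equivFin ι) (Fintype.equivFin ι).injective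
  haveI : WellFoundedLT ι := Finite.to_wellFoundedLT
  let e := (Module.Free.chooseBasis ℤ G).equivFun
  let φ : G →+ Lex (ι → ℤ) :=
    { toFun := fun x => toLex (e x)
      map_zero' := by simp
      map_add' := fun x y => by simp [map_add] }
  have hφ : Function.Injective φ := fun x y hxy => e.injective (toLex.injective hxy)
  set A' := A.map φ with hA'def
  set B' := B.map φ with hB'def
  have hA' : A' ≠ 0 := by simpa [hA'def, Multiset.map_eq_zero] using hA
  have hB' : B' ≠ 0 := by simpa [hB'def, Multiset.map_eq_zero] using hB
  have h' : pSum (nSum n A') {φ g} = nSum n B' := by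
    rw [hA'def, hB'def, ← nSum_map, ← nSum_map, ← h, pSum_map]
    congr 1
  obtain ⟨h'', hg'', hC⟩ := main_ordered n hn A' B' hA' hB' (φ g) h'
  obtain ⟨a, ha⟩ := Multiset.exists_mem_of_ne_zero hA
  have hmem : φ a + h'' ∈ B' :=
    hC ▸ mem_pSum.2 ⟨φ a, Multiset.mem_map_of_mem φ ha, h'', by simp, rfl⟩
  obtain ⟨b, hb, hbeq⟩ := Multiset.mem_map.1 hmem
  have hh'' : h'' = φ (b - a) := by rw [map_sub, hbeq]; abel
  refine ⟨b - a, ?_, ?_⟩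
  · apply hφ
    rw [map_nsmul, ← hh'', ← hg'']
  · apply Multiset.map_injective hφ
    rw [pSum_map]
    have hsing : ({b - a} : Multiset G).map φ = {h''} := by simp [hh'']
    rw [hsing, ← hA'def, hC, hB'def]
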